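/- Let q ≥ 3 be an integer and p = 2q. The q-blow-up of the 5-cycle C_5 is a [p+2, p]-graph, i.e., every induced subgraph on p+2 vertices has at least p edges. -/

import Mathlib

open SimpleGraph

/-- A graph `G` is an `[s,t]`-graph if every induced subgraph of order `s` has at least
`t` edges. -/
def IsSTGraph {V : Type*} [Fintype V] [DecidableEq V] (G : SimpleGraph V) [DecidableRel G.Adj]
    (s t : ℕ) : Prop :=
  ∀ S : Finset V, S.card = s → t ≤ (G.induce (S : Set V)).edgeFinset.card


/-- The `k`-blow-up of a graph `H`: each vertex is replaced by `k` copies, a copy of `u` is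
adjacent to a copy of `v` iff `u` and `v` are adjacent in `H`. -/
def blowup {α : Type*} (H : SimpleGraph α) (k : ℕ) : SimpleGraph (α × Fin k) where
  Adj x y := H.Adj x.1 y.1
  symm := ⟨fun _ _ h => H.adj_symm h⟩
  loopless := ⟨fun x h => H.irrefl h⟩

instance {α : Type*} (H : SimpleGraph α) [DecidableRel H.Adj] (k : ℕ) :
    DecidableRel (blowup H k).Adj :=
  fun x y => inferInstanceAs (Decidable (H.Adj x.1 y.1))


lemma L0 (q a b c d e : ℤ)
    (h : 1 ≤ a ∧ 1 ≤ b ∧ 1 ≤ c ∧ 1 ≤ d ∧ 1 ≤ e ∧ a + b + c + d + e = 2*q + 2) :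
    2*q ≤ a*b + b*c + c*d + d*e + e*a := by
  obtain ⟨h1, h2, h3, h4, h5, h6⟩ := h
  nlinarith [mul_nonneg (by linarith : (0:ℤ) ≤ a) (by linarith : (0:ℤ) ≤ b - 1),
    mul_nonneg (by linarith : (0:ℤ) ≤ b) (by linarith : (0:ℤ) ≤ c - 1),
    mul_nonneg (by linarith : (0:ℤ) ≤ c) (by linarith : (0:ℤ) ≤ d - 1),
    mul_nonneg (by linarith : (0:ℤ) ≤ d) (by linarith : (0:ℤ) ≤ e - 1),
    mul_nonneg (by linarith : (0:ℤ) ≤ e) (by linarith : (0:ℤ) ≤ a - 1)]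

lemma L1 (q a b c d e : ℤ)
    (h : 1 ≤ a ∧ 1 ≤ b ∧ 1 ≤ c ∧ 1 ≤ d ∧ e = 0 ∧ a + b + c + d + e = 2*q + 2) :
    2*q ≤ a*b + b*c + c*d + d*e + e*a := by
  obtain ⟨h1, h2, h3, h4, h5, h6⟩ := h
  subst h5
  nlinarith [mul_nonneg (by linarith : (0:ℤ) ≤ a - 1) (by linarith : (0:ℤ) ≤ b - 1),
    mul_nonneg (by linarith : (0:ℤ) ≤ c - 1) (by linarith : (0:ℤ) ≤ d - 1),
    mul_nonneg (by linarith : (0:ℤ) ≤ b) (by linarith : (0:ℤ) ≤ c)]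

lemma L2adj (q a b c d e : ℤ)
    (h : 1 ≤ a ∧ 1 ≤ b ∧ 1 ≤ c ∧ d = 0 ∧ e = 0 ∧ a + b + c + d + e = 2*q + 2) :
    2*q ≤ a*b + b*c + c*d + d*e + e*a := by
  obtain ⟨h1, h2, h3, h4, h5, h6⟩ := h
  subst h4; subst h5
  nlinarith [mul_nonneg (by linarith : (0:ℤ) ≤ b - 1) (by linarith : (0:ℤ) ≤ a + c - 2)]

lemma L2non (q a b c d e : ℤ)
    (h : 0 ≤ c ∧ 0 ≤ d ∧ c ≤ q ∧ d ≤ q ∧ a ≤ q ∧ 0 ≤ a ∧ 0 ≤ q ∧ b = 0 ∧ e = 0 ∧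
      a + b + c + d + e = 2*q + 2) :
    2*q ≤ a*b + b*c + c*d + d*e + e*a := by
  obtain ⟨h1, h2, h3, h4, h5, h6, h7, h8, h9, h10⟩ := h
  subst h8; subst h9
  nlinarith [mul_nonneg (by linarith : (0:ℤ) ≤ q - c) (by linarith : (0:ℤ) ≤ q - d),
    mul_nonneg h7 (by linarith : (0:ℤ) ≤ c + d - q - 2)]

lemma key_int (q a b c d e : ℤ) (hq : 3 ≤ q)
    (ha0 : 0 ≤ a) (hb0 : 0 ≤ b) (hc0 : 0 ≤ c) (hd0 : 0 ≤ d) (he0 : 0 ≤ e)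
    (ha : a ≤ q) (hb : b ≤ q) (hc : c ≤ q) (hd : d ≤ q) (he : e ≤ q)
    (hs : a + b + c + d + e = 2*q + 2) :
    2*q ≤ a*b + b*c + c*d + d*e + e*a := by
  rcases (by omega : a = 0 ∨ 1 ≤ a) with ha | ha
  ·
    rcases (by omega : b = 0 ∨ 1 ≤ b) with hb | hb
    ·
      rcases (by omega : c = 0 ∨ 1 ≤ c) with hc | hc
      ·
        rcases (by omega : d = 0 ∨ 1 ≤ d) with hd | hd
        ·
          rcases (by omega : e = 0 ∨ 1 ≤ e) with he | he
          ·
            exfalso; omega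
          ·
            exfalso; omega
        ·
          rcases (by omega : e = 0 ∨ 1 ≤ e) with he | he
          ·
            exfalso; omega
          ·
            exfalso; omega
      ·
        rcases (by omega : d = 0 ∨ 1 ≤ d) with hd | hd
        ·
          rcases (by omega : e = 0 ∨ 1 ≤ e) with he | he
          ·
            exfalso; omega
          ·
            exfalso; omega
        ·
          rcases (by omega : e = 0 ∨ 1 ≤ e) with he | he
          ·
            exfalso; omega
          ·
            nlinarith [L2adj q c d e a b (by omega)]
    ·
      rcases (by omega : c = 0 ∨ 1 ≤ c) with hc | hc
      ·
        rcases (by omega : d = 0 ∨ 1 ≤ d) with hd | hd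
        ·
          rcases (by omega : e = 0 ∨ 1 ≤ e) with he | he
          ·
            exfalso; omega
          ·
            exfalso; omega
        ·
          rcases (by omega : e = 0 ∨ 1 ≤ e) with he | he
          ·
            exfalso; omega
          ·
            nlinarith [L2non q b c d e a (by omega)]
      ·
        rcases (by omega : d = 0 ∨ 1 ≤ d) with hd | hd
        ·
          rcases (by omega : e = 0 ∨ 1 ≤ e) with he | he
          ·
            exfalso; omega
          ·
            nlinarith [L2non q e a b c d (by omega)]
        ·
          rcases (by omega : e = 0 ∨ 1 ≤ e) with he | he
          ·
            nlinarith [L2adj q b c d e a (by omega)]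
          ·
            nlinarith [L1 q b c d e a (by omega)]
  ·
    rcases (by omega : b = 0 ∨ 1 ≤ b) with hb | hb
    ·
      rcases (by omega : c = 0 ∨ 1 ≤ c) with hc | hc
      ·
        rcases (by omega : d = 0 ∨ 1 ≤ d) with hd | hd
        ·
          rcases (by omega : e = 0 ∨ 1 ≤ e) with he | he
          ·
            exfalso; omega
          ·
            exfalso; omega
        ·
          rcases (by omega : e = 0 ∨ 1 ≤ e) with he | he
          ·
            exfalso; omega
          ·
            nlinarith [L2adj q d e a b c (by omega)]
      ·
        rcases (by omega : d = 0 ∨ 1 ≤ d) with hd | hd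
        ·
          rcases (by omega : e = 0 ∨ 1 ≤ e) with he | he
          ·
            exfalso; omega
          ·
            nlinarith [L2non q c d e a b (by omega)]
        ·
          rcases (by omega : e = 0 ∨ 1 ≤ e) with he | he
          ·
            nlinarith [L2non q a b c d e (by omega)]
          ·
            nlinarith [L1 q c d e a b (by omega)]
    ·
      rcases (by omega : c = 0 ∨ 1 ≤ c) with hc | hc
      ·
        rcases (by omega : d = 0 ∨ 1 ≤ d) with hd | hd
        ·
          rcases (by omega : e = 0 ∨ 1 ≤ e) with he | he
          ·
            exfalso; omega
          ·
            nlinarith [L2adj q e a b c d (by omega)]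
        ·
          rcases (by omega : e = 0 ∨ 1 ≤ e) with he | he
          ·
            nlinarith [L2non q d e a b c (by omega)]
          ·
            nlinarith [L1 q d e a b c (by omega)]
      ·
        rcases (by omega : d = 0 ∨ 1 ≤ d) with hd | hd
        ·
          rcases (by omega : e = 0 ∨ 1 ≤ e) with he | he
          ·
            nlinarith [L2adj q a b c d e (by omega)]
          ·
            nlinarith [L1 q e a b c d (by omega)]
        ·
          rcases (by omega : e = 0 ∨ 1 ≤ e) with he | he
          ·
            nlinarith [L1 q a b c d e (by omega)]
          ·
            nlinarith [L0 q a b c d e (by omega)]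


lemma key_nat (q a b c d e : ℕ) (hq : 3 ≤ q)
    (ha : a ≤ q) (hb : b ≤ q) (hc : c ≤ q) (hd : d ≤ q) (he : e ≤ q)
    (hs : a + b + c + d + e = 2*q + 2) :
    4*q ≤ a*(b+e) + b*(c+a) + c*(d+b) + d*(e+c) + e*(a+d) := by
  have h := key_int q a b c d e (by exact_mod_cast hq)
    (by positivity) (by positivity) (by positivity) (by positivity) (by positivity)
    (by exact_mod_cast ha) (by exact_mod_cast hb) (by exact_mod_cast hc)
    (by exact_mod_cast hd) (by exact_mod_cast he) (by exact_mod_cast hs)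
  have : (4*q : ℤ) ≤ (a*(b+e) + b*(c+a) + c*(d+b) + d*(e+c) + e*(a+d) : ℕ) := by
    push_cast
    nlinarith [h]
  exact_mod_cast this

/-- for `q ≥ 3` and `p = 2q`, the `q`-blow-up of `C₅` is a `[p+2, p]`-graph. -/
theorem blowup_C5_isSTGraph (q p : ℕ) (hq : 3 ≤ q) (hp : p = 2 * q) :
    IsSTGraph (blowup (cycleGraph 5) q) (p + 2) p := by
  subst hp
  intro S hS
  set G := blowup (cycleGraph 5) q with hG
  set a : Fin 5 → ℕ := fun i => (S.filter (fun x => x.1 = i)).card with haa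
  have hsum : ∑ i, a i = 2*q + 2 := by
    rw [← hS]
    exact (Finset.card_eq_sum_card_fiberwise (fun x _ => Finset.mem_univ x.1)).symm
  have hle : ∀ i, a i ≤ q := by
    intro i
    have : (S.filter (fun x => x.1 = i)).card ≤ Fintype.card (Fin q) := by
      apply Finset.card_le_card_of_injOn Prod.snd
      · intro x _; exact Finset.mem_univ _
      · intro x hx y hy hxy
        simp only [Finset.mem_coe, Finset.mem_filter] at hx hy
        exact Prod.ext (hx.2.trans hy.2.symm) hxy
    simpa using this
  have hdeg : ∀ v : (S : Set (Fin 5 × Fin q)),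
      a (v.1.1 + 1) + a (v.1.1 + 4) ≤ (G.induce (S : Set (Fin 5 × Fin q))).degree v := by
    intro v
    rw [SimpleGraph.degree, SimpleGraph.neighborFinset_eq_filter]
    have himg : (Finset.univ.filter fun u : (S : Set (Fin 5 × Fin q)) =>
        (G.induce (S : Set (Fin 5 × Fin q))).Adj v u).image Subtype.val
        = S.filter (fun x => G.Adj v.1 x) := by
      ext x
      simp only [Finset.mem_image, Finset.mem_filter, Finset.mem_univ, true_and,
        comap_adj, Function.Embedding.coe_subtype]
      constructor
      · rintro ⟨u, hu, rfl⟩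
        exact ⟨u.2, by simpa using hu⟩
      · rintro ⟨hx, hadj⟩
        refine ⟨⟨x, hx⟩, ?_, rfl⟩
        simpa using hadj
    have hcard : (Finset.univ.filter fun u : (S : Set (Fin 5 × Fin q)) =>
        (G.induce (S : Set (Fin 5 × Fin q))).Adj v u).card
        = (S.filter (fun x => G.Adj v.1 x)).card := by
      rw [← himg]
      exact (Finset.card_image_of_injective _ Subtype.val_injective).symm
    rw [hcard]
    have hsub : (S.filter (fun x => x.1 = v.1.1 + 1)) ∪ (S.filter (fun x => x.1 = v.1.1 + 4))
        ⊆ S.filter (fun x => G.Adj v.1 x) := by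
      intro x hx
      rcases Finset.mem_union.1 hx with h | h <;> rw [Finset.mem_filter] at h ⊢ <;>
        refine ⟨h.1, ?_⟩ <;> rw [hG] <;>
        show (cycleGraph 5).Adj v.1.1 x.1 <;> rw [h.2, cycleGraph_adj] <;> simp <;> decide
    have hdisj : Disjoint (S.filter (fun x => x.1 = v.1.1 + 1))
        (S.filter (fun x => x.1 = v.1.1 + 4)) := by
      apply Finset.disjoint_filter_filter'
      rw [disjoint_iff_inf_le]
      intro x hx
      have h1 : x.1 = v.1.1 + 1 := hx.1
      have h2 : x.1 = v.1.1 + 4 := hx.2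
      exact absurd (add_left_cancel ((h1.symm.trans h2))) (by decide)
    calc a (v.1.1 + 1) + a (v.1.1 + 4)
        = ((S.filter (fun x => x.1 = v.1.1 + 1)) ∪ (S.filter (fun x => x.1 = v.1.1 + 4))).card :=
          (Finset.card_union_of_disjoint hdisj).symm
      _ ≤ _ := Finset.card_le_card hsub
  have hhand : ∑ v : (S : Set (Fin 5 × Fin q)), (G.induce (S : Set (Fin 5 × Fin q))).degree v
      = 2 * (G.induce (S : Set (Fin 5 × Fin q))).edgeFinset.card :=
    SimpleGraph.sum_degrees_eq_twice_card_edges _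
  have hsum2 : ∑ x ∈ S, (a (x.1 + 1) + a (x.1 + 4))
      ≤ 2 * (G.induce (S : Set (Fin 5 × Fin q))).edgeFinset.card := by
    rw [← hhand, ← Finset.sum_coe_sort S (fun x => a (x.1 + 1) + a (x.1 + 4))]
    exact Finset.sum_le_sum (fun v _ => hdeg v)
  have hgroup : ∑ x ∈ S, (a (x.1 + 1) + a (x.1 + 4))
      = ∑ i : Fin 5, a i * (a (i + 1) + a (i + 4)) := by
    have hfib := Finset.sum_fiberwise_of_maps_to
      (fun (x : Fin 5 × Fin q) (_ : x ∈ S) => Finset.mem_univ x.1)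
      (fun x => a (x.1 + 1) + a (x.1 + 4))
    rw [← hfib]
    refine Finset.sum_congr rfl (fun i _ => ?_)
    rw [Finset.sum_congr rfl (fun x hx => by
      rw [(Finset.mem_filter.1 hx).2]), Finset.sum_const, smul_eq_mul]
  have hkey : 4*q ≤ ∑ i : Fin 5, a i * (a (i + 1) + a (i + 4)) := by
    have h5 : ∑ i : Fin 5, a i * (a (i + 1) + a (i + 4))
        = a 0 * (a 1 + a 4) + a 1 * (a 2 + a 0) + a 2 * (a 3 + a 1)
          + a 3 * (a 4 + a 2) + a 4 * (a 0 + a 3) := by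
      have e1 : (0:Fin 5)+1 = 1 := by decide
      have e2 : (0:Fin 5)+4 = 4 := by decide
      have e3 : (1:Fin 5)+1 = 2 := by decide
      have e4 : (1:Fin 5)+4 = 0 := by decide
      have e5 : (2:Fin 5)+1 = 3 := by decide
      have e6 : (2:Fin 5)+4 = 1 := by decide
      have e7 : (3:Fin 5)+1 = 4 := by decide
      have e8 : (3:Fin 5)+4 = 2 := by decide
      have e9 : (4:Fin 5)+1 = 0 := by decide
      have e10 : (4:Fin 5)+4 = 3 := by decide
      rw [Fin.sum_univ_five, e1, e2, e3, e4, e5, e6, e7, e8, e9, e10]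
    have hsum5 : a 0 + a 1 + a 2 + a 3 + a 4 = 2*q + 2 := by
      rw [← hsum, Fin.sum_univ_five]
    rw [h5]
    exact key_nat q (a 0) (a 1) (a 2) (a 3) (a 4) hq (hle 0) (hle 1) (hle 2) (hle 3) (hle 4) hsum5
  have hEq : (G.induce (S : Set (Fin 5 × Fin q))).edgeFinset.card
      = ((blowup (cycleGraph 5) q).induce (S : Set (Fin 5 × Fin q))).edgeFinset.card := rfl
  omega
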